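/- The automorphism group of the graph G₅ has order exactly 12. -/
import Mathlib


/-- The graph `G₅` (the simplicial inverse pyramid): vertices `vᵢ = i` for `0 ≤ i ≤ 5`,
`mᵢ = 6 + i` for `0 ≤ i ≤ 5`, `t = 12`, `b = 13`; edges `vᵢ ~ v_{(i+1) % 6}`, `vᵢ ~ mᵢ`,
`mᵢ ~ t` for `i` even and `mᵢ ~ b` for `i` odd. -/
def G5 : SimpleGraph (Fin 14) :=
  SimpleGraph.fromRel (fun a b => (a, b) ∈
    ([(0, 1), (1, 2), (2, 3), (3, 4), (4, 5), (5, 0),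
      (0, 6), (1, 7), (2, 8), (3, 9), (4, 10), (5, 11),
      (6, 12), (8, 12), (10, 12), (7, 13), (9, 13), (11, 13)] : List (Fin 14 × Fin 14)))

noncomputable instance : Fintype (G5 ≃g G5) :=
  Fintype.ofInjective (fun θ : G5 ≃g G5 => θ.toEquiv) RelIso.toEquiv_injective

instance : DecidableRel G5.Adj := fun a b =>
  decidable_of_iff _ (SimpleGraph.fromRel_adj _ a b).symm

instance : DecidableEq (G5 ≃g G5) := fun a b =>
  decidable_of_iff (∀ x, a x = b x) ⟨fun h => RelIso.ext h, fun h x => by rw [h]⟩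

def mkAut (f g : Fin 14 → Fin 14) (h1 : ∀ x, g (f x) = x) (h2 : ∀ x, f (g x) = x)
    (h3 : ∀ a b, G5.Adj (f a) (f b) ↔ G5.Adj a b) : G5 ≃g G5 :=
  { toFun := f, invFun := g, left_inv := h1, right_inv := h2, map_rel_iff' := h3 _ _ }

def a0 : G5 ≃g G5 := mkAut ![0, 1, 2, 3, 4, 5, 6, 7, 8, 9, 10, 11, 12, 13] ![0, 1, 2, 3, 4, 5, 6, 7, 8, 9, 10, 11, 12, 13] (by decide) (by decide) (by decide)
def a1 : G5 ≃g G5 := mkAut ![0, 5, 4, 3, 2, 1, 6, 11, 10, 9, 8, 7, 12, 13] ![0, 5, 4, 3, 2, 1, 6, 11, 10, 9, 8, 7, 12, 13] (by decide) (by decide) (by decide)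
def a2 : G5 ≃g G5 := mkAut ![1, 2, 3, 4, 5, 0, 7, 8, 9, 10, 11, 6, 13, 12] ![5, 0, 1, 2, 3, 4, 11, 6, 7, 8, 9, 10, 13, 12] (by decide) (by decide) (by decide)
def a3 : G5 ≃g G5 := mkAut ![1, 0, 5, 4, 3, 2, 7, 6, 11, 10, 9, 8, 13, 12] ![1, 0, 5, 4, 3, 2, 7, 6, 11, 10, 9, 8, 13, 12] (by decide) (by decide) (by decide)
def a4 : G5 ≃g G5 := mkAut ![2, 3, 4, 5, 0, 1, 8, 9, 10, 11, 6, 7, 12, 13] ![4, 5, 0, 1, 2, 3, 10, 11, 6, 7, 8, 9, 12, 13] (by decide) (by decide) (by decide)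
def a5 : G5 ≃g G5 := mkAut ![2, 1, 0, 5, 4, 3, 8, 7, 6, 11, 10, 9, 12, 13] ![2, 1, 0, 5, 4, 3, 8, 7, 6, 11, 10, 9, 12, 13] (by decide) (by decide) (by decide)
def a6 : G5 ≃g G5 := mkAut ![3, 4, 5, 0, 1, 2, 9, 10, 11, 6, 7, 8, 13, 12] ![3, 4, 5, 0, 1, 2, 9, 10, 11, 6, 7, 8, 13, 12] (by decide) (by decide) (by decide)
def a7 : G5 ≃g G5 := mkAut ![3, 2, 1, 0, 5, 4, 9, 8, 7, 6, 11, 10, 13, 12] ![3, 2, 1, 0, 5, 4, 9, 8, 7, 6, 11, 10, 13, 12] (by decide) (by decide) (by decide)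
def a8 : G5 ≃g G5 := mkAut ![4, 5, 0, 1, 2, 3, 10, 11, 6, 7, 8, 9, 12, 13] ![2, 3, 4, 5, 0, 1, 8, 9, 10, 11, 6, 7, 12, 13] (by decide) (by decide) (by decide)
def a9 : G5 ≃g G5 := mkAut ![4, 3, 2, 1, 0, 5, 10, 9, 8, 7, 6, 11, 12, 13] ![4, 3, 2, 1, 0, 5, 10, 9, 8, 7, 6, 11, 12, 13] (by decide) (by decide) (by decide)
def a10 : G5 ≃g G5 := mkAut ![5, 0, 1, 2, 3, 4, 11, 6, 7, 8, 9, 10, 13, 12] ![1, 2, 3, 4, 5, 0, 7, 8, 9, 10, 11, 6, 13, 12] (by decide) (by decide) (by decide)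
def a11 : G5 ≃g G5 := mkAut ![5, 4, 3, 2, 1, 0, 11, 10, 9, 8, 7, 6, 13, 12] ![5, 4, 3, 2, 1, 0, 11, 10, 9, 8, 7, 6, 13, 12] (by decide) (by decide) (by decide)

def L : List (G5 ≃g G5) := [a0, a1, a2, a3, a4, a5, a6, a7, a8, a9, a10, a11]

lemma deg_map (θ : G5 ≃g G5) (x : Fin 14) : G5.degree (θ x) = G5.degree x := by
  rw [← SimpleGraph.card_neighborSet_eq_degree, ← SimpleGraph.card_neighborSet_eq_degree]
  exact Fintype.card_congr (θ.mapNeighborSet x).symm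

lemma fix_of_fix01 (ρ : G5 ≃g G5) (h0 : ρ 0 = 0) (h1 : ρ 1 = 1) : ∀ x, ρ x = x := by
  have inj : Function.Injective ρ := RelIso.injective ρ
  have adj : ∀ a b : Fin 14, G5.Adj a b → G5.Adj (ρ a) (ρ b) :=
    fun a b h => ρ.map_rel_iff.mpr h
  have h5 : ρ 5 = 5 := by
    have a := adj 5 0 (by decide); rw [h0] at a
    have d : G5.degree (ρ 5) = 3 := by rw [deg_map]; decide
    have key : ∀ x : Fin 14, G5.Adj x 0 → G5.degree x = 3 → x = 1 ∨ x = 5 := by decide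
    rcases key _ a d with h | h
    · exact absurd (inj (h.trans h1.symm)) (by decide)
    · exact h
  have h2 : ρ 2 = 2 := by
    have a := adj 2 1 (by decide); rw [h1] at a
    have d : G5.degree (ρ 2) = 3 := by rw [deg_map]; decide
    have key : ∀ x : Fin 14, G5.Adj x 1 → G5.degree x = 3 → x = 0 ∨ x = 2 := by decide
    rcases key _ a d with h | h
    · exact absurd (inj (h.trans h0.symm)) (by decide)
    · exact h
  have h4 : ρ 4 = 4 := by
    have a := adj 4 5 (by decide); rw [h5] at a
    have d : G5.degree (ρ 4) = 3 := by rw [deg_map]; decide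
    have key : ∀ x : Fin 14, G5.Adj x 5 → G5.degree x = 3 → x = 0 ∨ x = 4 := by decide
    rcases key _ a d with h | h
    · exact absurd (inj (h.trans h0.symm)) (by decide)
    · exact h
  have h3 : ρ 3 = 3 := by
    have a := adj 3 2 (by decide); rw [h2] at a
    have d : G5.degree (ρ 3) = 3 := by rw [deg_map]; decide
    have key : ∀ x : Fin 14, G5.Adj x 2 → G5.degree x = 3 → x = 1 ∨ x = 3 := by decide
    rcases key _ a d with h | h
    · exact absurd (inj (h.trans h1.symm)) (by decide)
    · exact h
  have h6 : ρ 6 = 6 := by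
    have a := adj 6 0 (by decide); rw [h0] at a
    have key : ∀ x : Fin 14, G5.Adj x 0 → x = 1 ∨ x = 5 ∨ x = 6 := by decide
    rcases key _ a with h | h | h
    · exact absurd (inj (h.trans h1.symm)) (by decide)
    · exact absurd (inj (h.trans h5.symm)) (by decide)
    · exact h
  have h7 : ρ 7 = 7 := by
    have a := adj 7 1 (by decide); rw [h1] at a
    have key : ∀ x : Fin 14, G5.Adj x 1 → x = 0 ∨ x = 2 ∨ x = 7 := by decide
    rcases key _ a with h | h | h
    · exact absurd (inj (h.trans h0.symm)) (by decide)
    · exact absurd (inj (h.trans h2.symm)) (by decide)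
    · exact h
  have h8 : ρ 8 = 8 := by
    have a := adj 8 2 (by decide); rw [h2] at a
    have key : ∀ x : Fin 14, G5.Adj x 2 → x = 1 ∨ x = 3 ∨ x = 8 := by decide
    rcases key _ a with h | h | h
    · exact absurd (inj (h.trans h1.symm)) (by decide)
    · exact absurd (inj (h.trans h3.symm)) (by decide)
    · exact h
  have h9 : ρ 9 = 9 := by
    have a := adj 9 3 (by decide); rw [h3] at a
    have key : ∀ x : Fin 14, G5.Adj x 3 → x = 2 ∨ x = 4 ∨ x = 9 := by decide
    rcases key _ a with h | h | h
    · exact absurd (inj (h.trans h2.symm)) (by decide)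
    · exact absurd (inj (h.trans h4.symm)) (by decide)
    · exact h
  have h10 : ρ 10 = 10 := by
    have a := adj 10 4 (by decide); rw [h4] at a
    have key : ∀ x : Fin 14, G5.Adj x 4 → x = 3 ∨ x = 5 ∨ x = 10 := by decide
    rcases key _ a with h | h | h
    · exact absurd (inj (h.trans h3.symm)) (by decide)
    · exact absurd (inj (h.trans h5.symm)) (by decide)
    · exact h
  have h11 : ρ 11 = 11 := by
    have a := adj 11 5 (by decide); rw [h5] at a
    have key : ∀ x : Fin 14, G5.Adj x 5 → x = 0 ∨ x = 4 ∨ x = 11 := by decide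
    rcases key _ a with h | h | h
    · exact absurd (inj (h.trans h0.symm)) (by decide)
    · exact absurd (inj (h.trans h4.symm)) (by decide)
    · exact h
  have h12 : ρ 12 = 12 := by
    have a := adj 12 6 (by decide); rw [h6] at a
    have key : ∀ x : Fin 14, G5.Adj x 6 → x = 0 ∨ x = 12 := by decide
    rcases key _ a with h | h
    · exact absurd (inj (h.trans h0.symm)) (by decide)
    · exact h
  have h13 : ρ 13 = 13 := by
    have a := adj 13 7 (by decide); rw [h7] at a
    have key : ∀ x : Fin 14, G5.Adj x 7 → x = 1 ∨ x = 13 := by decide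
    rcases key _ a with h | h
    · exact absurd (inj (h.trans h1.symm)) (by decide)
    · exact h
  intro x
  fin_cases x <;> assumption

lemma rigid (θ τ : G5 ≃g G5) (e0 : θ 0 = τ 0) (e1 : θ 1 = τ 1) : θ = τ := by
  have h0 : (θ.trans τ.symm) 0 = 0 := by
    rw [RelIso.trans_apply, e0]; exact τ.symm_apply_apply 0
  have h1 : (θ.trans τ.symm) 1 = 1 := by
    rw [RelIso.trans_apply, e1]; exact τ.symm_apply_apply 1
  have hfix := fix_of_fix01 (θ.trans τ.symm) h0 h1
  apply RelIso.ext
  intro x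
  have h := hfix x
  rw [RelIso.trans_apply] at h
  have := congrArg τ h
  rwa [RelIso.apply_symm_apply] at this

lemma mem_L (θ : G5 ≃g G5) : θ ∈ L := by
  have adj01 : G5.Adj (θ 0) (θ 1) := θ.map_rel_iff.mpr (by decide)
  have d0 : G5.degree (θ 0) = 3 := by rw [deg_map]; decide
  have d1 : G5.degree (θ 1) = 3 := by rw [deg_map]; decide
  have key : ∀ x y : Fin 14, G5.Adj x y → G5.degree x = 3 → G5.degree y = 3 →
      (x = 0 ∧ y = 1) ∨ (x = 0 ∧ y = 5) ∨ (x = 1 ∧ y = 2) ∨ (x = 1 ∧ y = 0) ∨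
      (x = 2 ∧ y = 3) ∨ (x = 2 ∧ y = 1) ∨ (x = 3 ∧ y = 4) ∨ (x = 3 ∧ y = 2) ∨
      (x = 4 ∧ y = 5) ∨ (x = 4 ∧ y = 3) ∨ (x = 5 ∧ y = 0) ∨ (x = 5 ∧ y = 4) := by decide
  rcases key _ _ adj01 d0 d1 with ⟨e0, e1⟩ | ⟨e0, e1⟩ | ⟨e0, e1⟩ | ⟨e0, e1⟩ | ⟨e0, e1⟩ |
    ⟨e0, e1⟩ | ⟨e0, e1⟩ | ⟨e0, e1⟩ | ⟨e0, e1⟩ | ⟨e0, e1⟩ | ⟨e0, e1⟩ | ⟨e0, e1⟩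
  · rw [rigid θ a0 (e0.trans (by decide)) (e1.trans (by decide))]; decide
  · rw [rigid θ a1 (e0.trans (by decide)) (e1.trans (by decide))]; decide
  · rw [rigid θ a2 (e0.trans (by decide)) (e1.trans (by decide))]; decide
  · rw [rigid θ a3 (e0.trans (by decide)) (e1.trans (by decide))]; decide
  · rw [rigid θ a4 (e0.trans (by decide)) (e1.trans (by decide))]; decide
  · rw [rigid θ a5 (e0.trans (by decide)) (e1.trans (by decide))]; decide
  · rw [rigid θ a6 (e0.trans (by decide)) (e1.trans (by decide))]; decide
  · rw [rigid θ a7 (e0.trans (by decide)) (e1.trans (by decide))]; decide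
  · rw [rigid θ a8 (e0.trans (by decide)) (e1.trans (by decide))]; decide
  · rw [rigid θ a9 (e0.trans (by decide)) (e1.trans (by decide))]; decide
  · rw [rigid θ a10 (e0.trans (by decide)) (e1.trans (by decide))]; decide
  · rw [rigid θ a11 (e0.trans (by decide)) (e1.trans (by decide))]; decide

/-- The automorphism group of the inverse pyramid `G₅` has order exactly 12. -/
theorem card_aut_G5 : Fintype.card (G5 ≃g G5) = 12 := by
  have huniv : (Finset.univ : Finset (G5 ≃g G5)) = L.toFinset := by
    ext x
    simp only [Finset.mem_univ, true_iff, List.mem_toFinset]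
    exact mem_L x
  rw [← Finset.card_univ, huniv, List.toFinset_card_of_nodup (by decide)]
  rfl
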